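/- Suppose x, y, z are coprime integers with x^5 + y^5 = z^l for an odd prime l, with xyz ≠ 0 and 5 not dividing z. Then there exist nonzero coprime integers z_1, z_2 with x + y = z_1^l, H_5(x,y) = z_2^l, and z = z_1 z_2, where H_5(x,y) = x^4 - x^3 y + x^2 y^2 - x y^3 + y^4. -/

import Mathlib

theorem factorization_55l_case_I (l : ℕ) (hl : l.Prime) (hodd : Odd l)
    (x y z : ℤ) (hxy : IsCoprime x y) (heq : x ^ 5 + y ^ 5 = z ^ l)
    (hnz : x * y * z ≠ 0) (h5 : ¬ (5 : ℤ) ∣ z) :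
    ∃ z₁ z₂ : ℤ, z₁ ≠ 0 ∧ z₂ ≠ 0 ∧ IsCoprime z₁ z₂ ∧
      x + y = z₁ ^ l ∧
      x ^ 4 - x ^ 3 * y + x ^ 2 * y ^ 2 - x * y ^ 3 + y ^ 4 = z₂ ^ l ∧
      z = z₁ * z₂ := by
  have hz : z ≠ 0 := fun h => hnz (by simp [h])
  set A : ℤ := x + y with hA
  set B : ℤ := x ^ 4 - x ^ 3 * y + x ^ 2 * y ^ 2 - x * y ^ 3 + y ^ 4 with hB
  have hmul : A * B = z ^ l := by rw [hA, hB]; linear_combination heq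
  have h5prime : Prime (5 : ℤ) := by norm_num
  -- common divisors of A and B divide 5 x^4 and 5 y^4
  set g : ℤ := (Int.gcd A B : ℤ) with hgdef
  have hgA : g ∣ A := Int.gcd_dvd_left A B
  have hgB : g ∣ B := Int.gcd_dvd_right A B
  have d1 : g ∣ 5 * x ^ 4 := by
    have : (5 : ℤ) * x ^ 4 = B - A * (y ^ 3 - 2 * y ^ 2 * x + 3 * y * x ^ 2 - 4 * x ^ 3) := by
      rw [hA, hB]; ring
    rw [this]; exact dvd_sub hgB (hgA.mul_right _)
  have d2 : g ∣ 5 * y ^ 4 := by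
    have : (5 : ℤ) * y ^ 4 = B - A * (x ^ 3 - 2 * x ^ 2 * y + 3 * x * y ^ 2 - 4 * y ^ 3) := by
      rw [hA, hB]; ring
    rw [this]; exact dvd_sub hgB (hgA.mul_right _)
  have hg5 : g ∣ 5 := by
    obtain ⟨u, v, huv⟩ := hxy.pow (m := 4) (n := 4)
    have h5eq : (5 : ℤ) = u * (5 * x ^ 4) + v * (5 * y ^ 4) := by linear_combination (-5 : ℤ) * huv
    rw [h5eq]; exact dvd_add (d1.mul_left u) (d2.mul_left v)
  have h5g : ¬ (5 : ℤ) ∣ g := by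
    intro hdvd
    have h5A : (5 : ℤ) ∣ A := hdvd.trans hgA
    have : (5 : ℤ) ∣ z ^ l := by rw [← hmul]; exact h5A.mul_right _
    exact h5 (h5prime.dvd_of_dvd_pow this)
  have hAB : IsCoprime A B := by
    rw [Int.isCoprime_iff_gcd_eq_one]
    have hg5' : ((Int.gcd A B : ℤ)) ∣ (((5:ℕ)):ℤ) := by rw [← hgdef]; exact_mod_cast hg5
    have hnat : Int.gcd A B ∣ 5 := Int.ofNat_dvd.mp hg5'
    rcases (Nat.dvd_prime (by norm_num)).mp hnat with h | h
    · exact h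
    · exfalso; exact h5g (by rw [hgdef, h]; norm_num)
  obtain ⟨z₁, hz₁⟩ := Int.eq_pow_of_mul_eq_pow_odd_left hAB hodd hmul
  obtain ⟨z₂, hz₂⟩ := Int.eq_pow_of_mul_eq_pow_odd_right hAB hodd hmul
  have hAne : A ≠ 0 := fun h => by
    rw [h, zero_mul] at hmul; exact pow_ne_zero l hz hmul.symm
  have hBne : B ≠ 0 := fun h => by
    rw [h, mul_zero] at hmul; exact pow_ne_zero l hz hmul.symm
  have hz₁ne : z₁ ≠ 0 := fun h => hAne (by rw [hz₁, h, zero_pow hl.ne_zero])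
  have hz₂ne : z₂ ≠ 0 := fun h => hBne (by rw [hz₂, h, zero_pow hl.ne_zero])
  have hcop : IsCoprime z₁ z₂ := by
    have : IsCoprime (z₁ ^ l) (z₂ ^ l) := by rw [← hz₁, ← hz₂]; exact hAB
    exact (IsCoprime.pow_left_iff hl.pos).mp ((IsCoprime.pow_right_iff hl.pos).mp this)
  refine ⟨z₁, z₂, hz₁ne, hz₂ne, hcop, hz₁, hz₂, ?_⟩
  have : z ^ l = (z₁ * z₂) ^ l := by rw [mul_pow, ← hz₁, ← hz₂, hmul]
  exact hodd.strictMono_pow.injective this
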